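/- Let b = 5·2^n with n ≥ 2. For every integer t with 2 ≤ t ≤ n + 2, K^t((b/2, b/2)) = (b − 2^{t−2}, b − 3·2^{t−2}); in particular, K^{n+2}((b/2, b/2)) = (4b/5, 2b/5). -/

import Mathlib

/-- The four base-`b` digits of `x` (viewed as a 4-digit string with leading
zeros allowed), sorted in decreasing order. -/
def sortedDigits (b x : ℕ) : List ℕ :=
  List.insertionSort (· ≥ ·) [x % b, x / b % b, x / b ^ 2 % b, x / b ^ 3 % b]

/-- The 4-digit base-`b` Kaprekar function `K_b(x) = D - A`. -/
def Kap (b x : ℕ) : ℕ :=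
  let l := sortedDigits b x
  (l[0]! * b ^ 3 + l[1]! * b ^ 2 + l[2]! * b + l[3]!) -
    (l[3]! * b ^ 3 + l[2]! * b ^ 2 + l[1]! * b + l[0]!)

/-- The difference pair `(a₃ - a₀, a₂ - a₁)` of a 4-digit base-`b` input. -/
def diffPair (b x : ℕ) : ℕ × ℕ :=
  let l := sortedDigits b x
  (l[0]! - l[3]!, l[1]! - l[2]!)

/-- `S_b`: the set of 4-digit base-`b` inputs whose sequence of Kaprekar
iterates is eventually constant and nonzero. -/
def KapSet (b : ℕ) : Set ℕ :=
  {x | x < b ^ 4 ∧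
    ∃ t, (∀ s, t ≤ s → (Kap b)^[s] x = (Kap b)^[t] x) ∧ (Kap b)^[t] x ≠ 0}

/-- Arrange the two coordinates of a pair in decreasing order. -/
def sort2 (p : ℕ × ℕ) : ℕ × ℕ := (max p.1 p.2, min p.1 p.2)

/-- A base-`b` difference pair: `b - 1 ≥ d ≥ d' ≥ 0`. -/
def IsDiffPair (b : ℕ) (p : ℕ × ℕ) : Prop := p.2 ≤ p.1 ∧ p.1 ≤ b - 1

/-- The Kaprekar map on base-`b` difference pairs. -/
def Kpair (b : ℕ) (p : ℕ × ℕ) : ℕ × ℕ :=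
  if p.1 = 0 ∧ p.2 = 0 then (0, 0)
  else if p.2 = 0 then
    -- type (c)
    sort2 (p.1 - 1, b - p.1)
  else if p.1 = p.2 ∨ p.1 + p.2 = b then
    -- type (b)
    sort2 ((2 * (p.1 : ℤ) - ((b : ℤ) - 1)).natAbs,
           (2 * (p.1 : ℤ) - ((b : ℤ) + 1)).natAbs)
  else
    -- type (a)
    sort2 ((2 * (p.1 : ℤ) - (b : ℤ)).natAbs, (2 * (p.2 : ℤ) - (b : ℤ)).natAbs)

lemma Kpair_step (b k : ℕ) (hbig : 3 * 2 ^ (k + 1) < b) :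
    Kpair b (b - 2 ^ k, b - 3 * 2 ^ k) = (b - 2 ^ (k + 1), b - 3 * 2 ^ (k + 1)) := by
  have hp : (0:ℕ) < 2 ^ k := Nat.pow_pos (by norm_num)
  have hs : 2 ^ (k + 1) = 2 * 2 ^ k := by ring
  unfold Kpair sort2
  have hne1 : ¬((b - 2 ^ k, b - 3 * 2 ^ k).1 = 0 ∧ (b - 2 ^ k, b - 3 * 2 ^ k).2 = 0) := by
    simp only []; omega
  have hne2 : ¬((b - 2 ^ k, b - 3 * 2 ^ k).2 = 0) := by simp only []; omega
  have hne3 : ¬((b - 2 ^ k, b - 3 * 2 ^ k).1 = (b - 2 ^ k, b - 3 * 2 ^ k).2 ∨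
      (b - 2 ^ k, b - 3 * 2 ^ k).1 + (b - 2 ^ k, b - 3 * 2 ^ k).2 = b) := by
    simp only []; omega
  rw [if_neg hne1, if_neg hne2, if_neg hne3]
  simp only []
  have hA : (2 * (((b - 2 ^ k : ℕ)) : ℤ) - (b : ℤ)).natAbs = b - 2 ^ (k + 1) := by
    have h1 : 2 * ((b - 2 ^ k : ℕ) : ℤ) - (b : ℤ) = ((b - 2 ^ (k + 1) : ℕ) : ℤ) := by
      omega
    rw [h1, Int.natAbs_natCast]
  have hB : (2 * (((b - 3 * 2 ^ k : ℕ)) : ℤ) - (b : ℤ)).natAbs = b - 3 * 2 ^ (k + 1) := by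
    have h1 : 2 * ((b - 3 * 2 ^ k : ℕ) : ℤ) - (b : ℤ) = ((b - 3 * 2 ^ (k + 1) : ℕ) : ℤ) := by
      omega
    rw [h1, Int.natAbs_natCast]
  rw [hA, hB]
  have hle : b - 3 * 2 ^ (k + 1) ≤ b - 2 ^ (k + 1) := by omega
  rw [max_eq_left hle, min_eq_right hle]

/-- the trajectory of `(b/2, b/2)` for `b = 5·2^n`, `n ≥ 2`. -/
theorem kaprekar_trajectory_half_half (n b : ℕ) (hn : 2 ≤ n)
    (hb : b = 5 * 2 ^ n) :
    (∀ t : ℕ, 2 ≤ t → t ≤ n + 2 →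
      (Kpair b)^[t] (b / 2, b / 2) = (b - 2 ^ (t - 2), b - 3 * 2 ^ (t - 2))) ∧
    (Kpair b)^[n + 2] (b / 2, b / 2) = (4 * b / 5, 2 * b / 5) := by
  have h2n : 2 ^ n = 2 * 2 ^ (n - 1) := by
    conv_lhs => rw [show n = (n - 1) + 1 by omega]
    ring
  have hM : 2 ≤ 2 ^ (n - 1) := by
    calc (2:ℕ) = 2 ^ 1 := rfl
    _ ≤ 2 ^ (n - 1) := Nat.pow_le_pow_right (by norm_num) (by omega)
  have hhalf : b / 2 = 5 * 2 ^ (n - 1) := by omega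
  have hbval : b = 10 * 2 ^ (n - 1) := by omega
  -- first iterate
  have hit1 : Kpair b (b / 2, b / 2) = (1, 1) := by
    unfold Kpair sort2
    have hne1 : ¬((b / 2, b / 2).1 = 0 ∧ (b / 2, b / 2).2 = 0) := by simp only []; omega
    have hne2 : ¬((b / 2, b / 2).2 = 0) := by simp only []; omega
    have heq : ((b / 2, b / 2).1 = (b / 2, b / 2).2 ∨ (b / 2, b / 2).1 + (b / 2, b / 2).2 = b) :=
      Or.inl rfl
    rw [if_neg hne1, if_neg hne2, if_pos heq]
    simp only []
    have h1 : 2 * ((b / 2 : ℕ) : ℤ) - ((b : ℤ) - 1) = 1 := by omega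
    have h2 : 2 * ((b / 2 : ℕ) : ℤ) - ((b : ℤ) + 1) = -1 := by omega
    rw [h1, h2]
    rfl
  have hit2 : Kpair b (1, 1) = (b - 1, b - 3) := by
    unfold Kpair sort2
    have hne1 : ¬(((1:ℕ), (1:ℕ)).1 = 0 ∧ ((1:ℕ), (1:ℕ)).2 = 0) := by simp
    have hne2 : ¬(((1:ℕ), (1:ℕ)).2 = 0) := by simp
    have heq : (((1:ℕ), (1:ℕ)).1 = ((1:ℕ), (1:ℕ)).2 ∨ ((1:ℕ),(1:ℕ)).1 + ((1:ℕ),(1:ℕ)).2 = b) :=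
      Or.inl rfl
    rw [if_neg hne1, if_neg hne2, if_pos heq]
    simp only []
    have h1 : (2 * ((1:ℕ) : ℤ) - ((b : ℤ) - 1)).natAbs = b - 3 := by
      have : 2 * ((1:ℕ) : ℤ) - ((b : ℤ) - 1) = -(((b - 3 : ℕ)) : ℤ) := by
        push_cast [Nat.cast_sub (by omega : 3 ≤ b)]
        ring
      rw [this, Int.natAbs_neg, Int.natAbs_natCast]
    have h2 : (2 * ((1:ℕ) : ℤ) - ((b : ℤ) + 1)).natAbs = b - 1 := by
      have : 2 * ((1:ℕ) : ℤ) - ((b : ℤ) + 1) = -(((b - 1 : ℕ)) : ℤ) := by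
        push_cast [Nat.cast_sub (by omega : 1 ≤ b)]
        ring
      rw [this, Int.natAbs_neg, Int.natAbs_natCast]
    rw [h1, h2]
    have hle : b - 3 ≤ b - 1 := by omega
    rw [max_eq_right hle, min_eq_left hle]
  have key : ∀ s : ℕ, s ≤ n →
      (Kpair b)^[s + 2] (b / 2, b / 2) = (b - 2 ^ s, b - 3 * 2 ^ s) := by
    intro s
    induction s with
    | zero =>
      intro _
      simp only [pow_zero, mul_one]
      rw [show (0 + 2 : ℕ) = 2 from rfl]
      rw [Function.iterate_succ_apply, Function.iterate_one, hit1, hit2]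
    | succ m ih =>
      intro hm
      have hmn : m ≤ n := by omega
      have hpow : 2 ^ (m + 1) ≤ 2 ^ n := Nat.pow_le_pow_right (by norm_num) (by omega)
      rw [show m + 1 + 2 = (m + 2) + 1 by ring, Function.iterate_succ_apply', ih hmn]
      exact Kpair_step b m (by omega)
  constructor
  · intro t h2 hn2
    have := key (t - 2) (by omega)
    rwa [show t - 2 + 2 = t by omega] at this
  · have := key n le_rfl
    rw [this]
    have h4 : b - 2 ^ n = 4 * b / 5 := by omega
    have h5 : b - 3 * 2 ^ n = 2 * b / 5 := by omega
    rw [h4, h5]
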